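/- Let D be a cocomplete category and let X : ℕ ⥤ D be a countable sequence X_0 ⟶ X_1 ⟶ X_2 ⟶ ⋯ such that for every n the transition morphism X_n ⟶ X_{n+1} is a coprojection. Then the canonical morphism X_0 ⟶ colim_{n} X_n (the transfinite composition of the sequence, i.e. the colimit structure morphism at 0) is a coprojection. -/

import Mathlib

open CategoryTheory CategoryTheory.Limits

/-- A morphism `f : A ⟶ X` in a category `D` with (binary) coproducts is a *coprojection*
if there exist an object `Y` and an isomorphism, in the arrow category of `D`, between `f`
and the canonical coproduct inclusion `A ⟶ A ⨿ Y`. -/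
def IsCoprojection {D : Type*} [Category D] [HasColimits D] {A X : D} (f : A ⟶ X) : Prop :=
  ∃ Y : D, Nonempty (Arrow.mk f ≅ Arrow.mk (coprod.inl : A ⟶ A ⨿ Y))

/-- In a cocomplete category, the class of coprojections is closed under countable
transfinite compositions: if `X : ℕ ⥤ D` is a sequence `X 0 ⟶ X 1 ⟶ ⋯` all of whose
transition morphisms `X n ⟶ X (n+1)` are coprojections, then the canonical morphism
`X 0 ⟶ colim X` is a coprojection. -/
theorem isCoprojection_transfiniteComposition {D : Type*} [Category D] [HasColimits D]
    (X : ℕ ⥤ D) (hX : ∀ n : ℕ, IsCoprojection (X.map (homOfLE (Nat.le_succ n)))) :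
    IsCoprojection (colimit.ι X 0) := by
  choose Y hY using hX
  have e : ∀ n : ℕ, Arrow.mk (X.map (homOfLE (Nat.le_succ n))) ≅
      Arrow.mk (coprod.inl : X.obj n ⟶ X.obj n ⨿ Y n) := fun n => (hY n).some
  let φ : ∀ n : ℕ, X.obj (n+1) ≅ X.obj n ⨿ Y n := fun n =>
    Arrow.rightFunc.mapIso (e n) ≪≫
      coprod.mapIso (Arrow.leftFunc.mapIso (e n)).symm (Iso.refl (Y n))
  have hφ : ∀ n, X.map (homOfLE (Nat.le_succ n)) ≫ (φ n).hom = coprod.inl := by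
    intro n
    have w := Arrow.w (e n).hom
    simp only [Arrow.mk_hom] at w
    simp only [φ, Iso.trans_hom, Functor.mapIso_hom, coprod.mapIso_hom, Iso.symm_hom,
      Functor.mapIso_inv, Iso.refl_hom]
    show X.map _ ≫ ((e n).hom.right ≫ coprod.map (e n).inv.left (𝟙 (Y n))) = _
    rw [← Category.assoc]
    show (X.map _ ≫ (e n).hom.right) ≫ _ = _
    rw [← w, Category.assoc, coprod.inl_map, ← Category.assoc]
    have hl : (e n).hom.left ≫ (e n).inv.left = 𝟙 _ := by
      rw [← Arrow.comp_left, Iso.hom_inv_id]; rfl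
    show ((e n).hom.left ≫ (e n).inv.left) ≫ coprod.inl = coprod.inl
    rw [hl, Category.id_comp]
  let c : ∀ n : ℕ, X.obj n ⟶ X.obj 0 ⨿ (∐ Y) := fun n =>
    Nat.rec coprod.inl
      (fun n cn => (φ n).hom ≫ coprod.desc cn (Sigma.ι Y n ≫ coprod.inr)) n
  have hc : ∀ n, X.map (homOfLE (Nat.le_succ n)) ≫ c (n+1) = c n := by
    intro n
    show X.map _ ≫ (φ n).hom ≫ _ = c n
    rw [← Category.assoc, hφ, coprod.inl_desc]
  have hnat : ∀ (n m : ℕ) (h : n ≤ m), X.map (homOfLE h) ≫ c m = c n := by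
    intro n m
    induction m with
    | zero =>
        intro h
        obtain rfl : n = 0 := Nat.le_zero.mp h
        have : homOfLE h = 𝟙 (0 : ℕ) := rfl
        rw [this, X.map_id, Category.id_comp]
    | succ m ih =>
        intro h
        rcases Nat.lt_succ_iff_lt_or_eq.mp (Nat.lt_succ_of_le h) with h' | rfl
        · have h'' : n ≤ m := Nat.lt_succ_iff.mp h'
          have : homOfLE h = homOfLE h'' ≫ homOfLE (Nat.le_succ m) := rfl
          rw [this, X.map_comp, Category.assoc, hc, ih]
        · have : homOfLE h = 𝟙 (m + 1) := rfl
          rw [this, X.map_id, Category.id_comp]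
  let cone : Cocone X :=
    { pt := X.obj 0 ⨿ (∐ Y)
      ι := { app := c
             naturality := by
               intro n m f
               have : f = homOfLE (leOfHom f) := rfl
               rw [this]
               simpa using hnat n m (leOfHom f) } }
  let h : colimit X ⟶ X.obj 0 ⨿ (∐ Y) := colimit.desc X cone
  let g : X.obj 0 ⨿ (∐ Y) ⟶ colimit X :=
    coprod.desc (colimit.ι X 0)
      (Sigma.desc fun n => coprod.inr ≫ (φ n).inv ≫ colimit.ι X (n+1))
  have hmap : ∀ n, (coprod.inl : X.obj n ⟶ _) ≫ (φ n).inv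
      = X.map (homOfLE (Nat.le_succ n)) := by
    intro n; rw [← hφ n, Category.assoc, Iso.hom_inv_id, Category.comp_id]
  have hcg : ∀ n, c n ≫ g = colimit.ι X n := by
    intro n
    induction n with
    | zero => exact coprod.inl_desc _ _
    | succ n ih =>
        show ((φ n).hom ≫ coprod.desc (c n) (Sigma.ι Y n ≫ coprod.inr)) ≫ g = _
        have h1 : (Sigma.ι Y n ≫ coprod.inr) ≫ g
            = coprod.inr ≫ ((φ n).inv ≫ colimit.ι X (n+1)) := by
          rw [Category.assoc]
          show Sigma.ι Y n ≫ coprod.inr ≫ g = _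
          rw [coprod.inr_desc, Sigma.ι_desc]
        have h2 : c n ≫ g = coprod.inl ≫ ((φ n).inv ≫ colimit.ι X (n+1)) := by
          rw [ih, ← Category.assoc, hmap, colimit.w X (homOfLE (Nat.le_succ n))]
        rw [Category.assoc, coprod.desc_comp, h1, h2]
        have h3 : coprod.desc (coprod.inl ≫ ((φ n).inv ≫ colimit.ι X (n+1)))
            (coprod.inr ≫ ((φ n).inv ≫ colimit.ι X (n+1)))
            = (φ n).inv ≫ colimit.ι X (n+1) := by
          ext
          · exact coprod.inl_desc _ _
          · exact coprod.inr_desc _ _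
        rw [h3, Iso.hom_inv_id_assoc]
  have hhg : h ≫ g = 𝟙 (colimit X) := by
    apply colimit.hom_ext
    intro j
    have : colimit.ι X j ≫ h = c j := colimit.ι_desc cone j
    rw [← Category.assoc, this, hcg, Category.comp_id]
  have hgh : g ≫ h = 𝟙 (X.obj 0 ⨿ (∐ Y)) := by
    apply coprod.hom_ext
    · rw [← Category.assoc, Category.comp_id]
      show (coprod.inl ≫ g) ≫ h = coprod.inl
      rw [coprod.inl_desc]
      exact colimit.ι_desc cone 0
    · rw [← Category.assoc, Category.comp_id]
      show (coprod.inr ≫ g) ≫ h = coprod.inr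
      rw [coprod.inr_desc]
      apply Sigma.hom_ext
      intro n
      rw [← Category.assoc, Sigma.ι_desc]
      have : colimit.ι X (n+1) ≫ h = c (n+1) := colimit.ι_desc cone (n+1)
      rw [Category.assoc, Category.assoc, this]
      show coprod.inr ≫ (φ n).inv ≫ (φ n).hom ≫ _ = _
      rw [Iso.inv_hom_id_assoc, coprod.inr_desc]
  refine ⟨∐ Y, ⟨Arrow.isoMk (Iso.refl _) ⟨h, g, hhg, hgh⟩ ?_⟩⟩
  simp only [Arrow.mk_hom, Iso.refl_hom, Category.id_comp]
  show coprod.inl = colimit.ι X 0 ≫ h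
  exact (colimit.ι_desc cone 0).symm
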